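/- If m, m' ∈ M and ρ ∈ ℕ with ρ ≤ d_S(m, m'), then the distance from the sphere S_S(m, ρ) to m' equals d_S(m, m') − ρ. -/

import Mathlib

open MulAction Pointwise Filter

/-- A cell space: a transitive left `G`-set `M` with a choice of base point `m0`
and coordinates `coord m` satisfying `coord m • m0 = m`. -/
structure CellSpace (G M : Type*) [Group G] [MulAction G M] where
  m0 : M
  coord : M → G
  coord_spec : ∀ m : M, coord m • m0 = m

namespace CellSpace

variable {G M : Type*} [Group G] [MulAction G M] (R : CellSpace G M)

/-- The stabiliser `G₀` of the base point. -/
def G0 : Subgroup G := MulAction.stabilizer G R.m0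

/-- The induced right quotient-set semi-action `m ⊲ gG₀ = (coord m * g) • m₀`. -/
def rsa (m : M) (q : G ⧸ R.G0) : M :=
  Quotient.liftOn' q (fun g => (R.coord m * g) • R.m0) (by
    intro a b h
    have hab : a⁻¹ * b ∈ R.G0 := QuotientGroup.leftRel_apply.mp h
    have hm : (a⁻¹ * b) • R.m0 = R.m0 := hab
    have hba : b • R.m0 = a • R.m0 := by
      calc b • R.m0 = a • (a⁻¹ * b) • R.m0 := by rw [← mul_smul]; group
        _ = a • R.m0 := by rw [hm]
    simp only [mul_smul, hba])

/-- `S⁻¹ = {g⁻¹G₀ : s ∈ S, g ∈ s}`. -/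
def sinv (S : Set (G ⧸ R.G0)) : Set (G ⧸ R.G0) :=
  {x | ∃ g : G, ((g : G ⧸ R.G0) ∈ S) ∧ x = ((g⁻¹ : G) : G ⧸ R.G0)}

/-- Iterated application of the right semi-action along a word. -/
def apply (m : M) (l : List (G ⧸ R.G0)) : M := l.foldl R.rsa m

/-- `S` right generates `R`: every point is reachable from `m₀` by a word over `S ∪ S⁻¹`. -/
def RightGenerates (S : Set (G ⧸ R.G0)) : Prop :=
  ∀ m : M, ∃ l : List (G ⧸ R.G0), (∀ s ∈ l, s ∈ S ∪ R.sinv S) ∧ R.apply R.m0 l = m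

/-- `G₀ · S ⊆ S`. -/
def Saturated (S : Set (G ⧸ R.G0)) : Prop :=
  ∀ g₀ ∈ R.G0, ∀ s ∈ S, g₀ • s ∈ S

/-- `S` is symmetric: `S⁻¹ ⊆ S`. -/
def Symm (S : Set (G ⧸ R.G0)) : Prop := R.sinv S ⊆ S

/-- The `S`-metric: the least length of a word over `S` taking `m` to `m'`. -/
noncomputable def dist (S : Set (G ⧸ R.G0)) (m m' : M) : ℕ :=
  sInf {k | ∃ l : List (G ⧸ R.G0), l.length = k ∧ (∀ s ∈ l, s ∈ S) ∧ R.apply m l = m'}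

/-- The ball of radius `ρ` centred at `m` in the `S`-metric. -/
def ball (S : Set (G ⧸ R.G0)) (m : M) (ρ : ℕ) : Set M :=
  {m' | R.dist S m m' ≤ ρ}

/-- The sphere of radius `ρ` centred at `m` in the `S`-metric. -/
def sphere (S : Set (G ⧸ R.G0)) (m : M) (ρ : ℕ) : Set M :=
  {m' | R.dist S m m' = ρ}

/-- The semi-action of `M` on itself under the identification `m ↦ G_{m₀,m}`. -/
noncomputable def rsaM (m m' : M) : M := R.rsa m ((R.coord m' : G) : G ⧸ R.G0)

end CellSpace
namespace CellSpace
variable {G M : Type*} [Group G] [MulAction G M] (R : CellSpace G M)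

/-- Distance (in `ℕ∞`) from a set to a point, `∞` for the empty set. -/
noncomputable def distToPt (S : Set (G ⧸ R.G0)) (A : Set M) (m' : M) : ℕ∞ :=
  sInf ((fun a => (R.dist S a m' : ℕ∞)) '' A)

end CellSpace

namespace CellSpaceAux

open CellSpace

variable {G M : Type*} [Group G] [MulAction G M] (R : CellSpace G M)
variable (S : Set (G ⧸ R.G0))

lemma rsa_mk (m : M) (g : G) : R.rsa m ((g : G ⧸ R.G0)) = (R.coord m * g) • R.m0 := rfl

lemma apply_append (m : M) (l1 l2 : List (G ⧸ R.G0)) :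
    R.apply m (l1 ++ l2) = R.apply (R.apply m l1) l2 := List.foldl_append

lemma rev_step' (hsat : R.Saturated S) (hsym : R.Symm S) (m : M) (g : G)
    (hg : (g : G ⧸ R.G0) ∈ S) :
    ∃ h : G, ((h : G ⧸ R.G0) ∈ S) ∧ R.rsa (R.rsa m g) h = m := by
  set m'' := R.rsa m g with hm''
  have hm''' : m'' = (R.coord m * g) • R.m0 := rfl
  set g0 : G := (R.coord m'')⁻¹ * (R.coord m * g) with hg0def
  have hg0 : g0 ∈ R.G0 := by
    show g0 • R.m0 = R.m0
    have hmm : (R.coord m * g) • R.m0 = m'' := hm'''.symm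
    rw [hg0def, mul_smul, hmm, inv_smul_eq_iff, R.coord_spec]
  refine ⟨g0 * g⁻¹, ?_, ?_⟩
  · have hinv : ((g⁻¹ : G) : G ⧸ R.G0) ∈ S := hsym ⟨g, hg, rfl⟩
    have := hsat g0 hg0 _ hinv
    convert this using 1
    rfl
  · rw [rsa_mk]
    have : R.coord m'' * (g0 * g⁻¹) = R.coord m := by
      rw [hg0def]; group
    rw [this, R.coord_spec]

lemma word_rev (hsat : R.Saturated S) (hsym : R.Symm S) (l : List (G ⧸ R.G0))
    (hl : ∀ s ∈ l, s ∈ S) : ∀ m : M, ∃ l' : List (G ⧸ R.G0),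
      l'.length = l.length ∧ (∀ s ∈ l', s ∈ S) ∧ R.apply (R.apply m l) l' = m := by
  induction l with
  | nil => exact fun m => ⟨[], rfl, by simp, rfl⟩
  | cons s t ih =>
    intro m
    obtain ⟨g, hgrep⟩ := QuotientGroup.mk_surjective s
    have hs : (g : G ⧸ R.G0) ∈ S := by rw [hgrep]; exact hl s List.mem_cons_self
    obtain ⟨l', hlen, hl', happ⟩ := ih (fun x hx => hl x (List.mem_cons_of_mem _ hx)) (R.rsa m s)
    obtain ⟨h, hhS, hrev⟩ := rev_step' R S hsat hsym m g hs
    refine ⟨l' ++ [(h : G ⧸ R.G0)], by simp [hlen], ?_, ?_⟩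
    · intro x hx
      rcases List.mem_append.mp hx with h1 | h2
      · exact hl' x h1
      · simp at h2; rw [h2]; exact hhS
    · have h1 : R.apply m (s :: t) = R.apply (R.rsa m s) t := rfl
      rw [h1, apply_append, happ]
      show R.rsa (R.rsa m s) ((h : G ⧸ R.G0)) = m
      rw [← hgrep]
      exact hrev

lemma exists_word (hsat : R.Saturated S) (hsym : R.Symm S) (hgen : R.RightGenerates S)
    (m m' : M) : ∃ l : List (G ⧸ R.G0), (∀ s ∈ l, s ∈ S) ∧ R.apply m l = m' := by
  obtain ⟨l1, hl1, happ1⟩ := hgen m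
  obtain ⟨l2, hl2, happ2⟩ := hgen m'
  have hS1 : ∀ s ∈ l1, s ∈ S := fun s hs => by
    rcases hl1 s hs with h | h
    · exact h
    · exact hsym h
  have hS2 : ∀ s ∈ l2, s ∈ S := fun s hs => by
    rcases hl2 s hs with h | h
    · exact h
    · exact hsym h
  obtain ⟨l1', _, hl1', happ1'⟩ := word_rev R S hsat hsym l1 hS1 R.m0
  rw [happ1] at happ1'
  refine ⟨l1' ++ l2, ?_, ?_⟩
  · intro s hs
    rcases List.mem_append.mp hs with h | h
    · exact hl1' s h
    · exact hS2 s h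
  · rw [apply_append, happ1', happ2]

lemma dist_set_nonempty (hsat : R.Saturated S) (hsym : R.Symm S) (hgen : R.RightGenerates S)
    (m m' : M) :
    {k | ∃ l : List (G ⧸ R.G0), l.length = k ∧ (∀ s ∈ l, s ∈ S) ∧ R.apply m l = m'}.Nonempty := by
  obtain ⟨l, hl, happ⟩ := exists_word R S hsat hsym hgen m m'
  exact ⟨l.length, l, rfl, hl, happ⟩

lemma dist_spec (hsat : R.Saturated S) (hsym : R.Symm S) (hgen : R.RightGenerates S)
    (m m' : M) : ∃ l : List (G ⧸ R.G0), l.length = R.dist S m m' ∧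
      (∀ s ∈ l, s ∈ S) ∧ R.apply m l = m' :=
  Nat.sInf_mem (dist_set_nonempty R S hsat hsym hgen m m')

lemma dist_le (m m' : M) (l : List (G ⧸ R.G0)) (hl : ∀ s ∈ l, s ∈ S)
    (happ : R.apply m l = m') : R.dist S m m' ≤ l.length :=
  Nat.sInf_le ⟨l, rfl, hl, happ⟩

lemma dist_triangle (hsat : R.Saturated S) (hsym : R.Symm S) (hgen : R.RightGenerates S)
    (m m' m'' : M) : R.dist S m m'' ≤ R.dist S m m' + R.dist S m' m'' := by
  obtain ⟨l1, hlen1, hl1, happ1⟩ := dist_spec R S hsat hsym hgen m m'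
  obtain ⟨l2, hlen2, hl2, happ2⟩ := dist_spec R S hsat hsym hgen m' m''
  have := dist_le R S m m'' (l1 ++ l2) (fun s hs => by
    rcases List.mem_append.mp hs with h | h
    · exact hl1 s h
    · exact hl2 s h) (by rw [apply_append, happ1, happ2])
  simpa [hlen1, hlen2] using this

end CellSpaceAux

/-- `d_S(S_S(m, ρ), m') = d_S(m, m') − ρ` whenever `ρ ≤ d_S(m, m')`. -/
theorem stmt10 {G M : Type*} [Group G] [MulAction G M] (R : CellSpace G M)
    (S : Set (G ⧸ R.G0)) (hsat : R.Saturated S) (hsym : R.Symm S)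
    (hgen : R.RightGenerates S) (m m' : M) (ρ : ℕ) (hρ : ρ ≤ R.dist S m m') :
    R.distToPt S (R.sphere S m ρ) m' = ((R.dist S m m' - ρ : ℕ) : ℕ∞) := by
  open CellSpaceAux in
  set d := R.dist S m m' with hd
  obtain ⟨l, hlen, hlS, happ⟩ := dist_spec R S hsat hsym hgen m m'
  set a := R.apply m (l.take ρ) with ha
  have hsplit : R.apply a (l.drop ρ) = m' := by
    rw [ha, ← apply_append, List.take_append_drop, happ]
  have hma : R.dist S m a ≤ ρ := by
    have h0 := dist_le R S m a (l.take ρ) (fun s hs => hlS s (List.mem_of_mem_take hs)) rfl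
    have h2 : (l.take ρ).length = ρ := by rw [List.length_take, hlen]; omega
    omega
  have ham' : R.dist S a m' ≤ d - ρ := by
    have := dist_le R S a m' (l.drop ρ) (fun s hs => hlS s (List.mem_of_mem_drop hs)) hsplit
    simpa [List.length_drop, hlen] using this
  have htri : d ≤ R.dist S m a + R.dist S a m' := dist_triangle R S hsat hsym hgen m a m'
  have ham'_eq : R.dist S a m' = d - ρ := by omega
  have hma_eq : R.dist S m a = ρ := by omega
  have hmem : a ∈ R.sphere S m ρ := hma_eq
  apply le_antisymm
  · refine sInf_le ⟨a, hmem, ?_⟩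
    show ((R.dist S a m' : ℕ∞)) = _
    rw [ham'_eq]
  · apply le_sInf
    rintro x ⟨b, hb, rfl⟩
    have hbd : R.dist S m b = ρ := hb
    have : d ≤ ρ + R.dist S b m' := by
      have := dist_triangle R S hsat hsym hgen m b m'
      omega
    show ((R.dist S m m' - ρ : ℕ) : ℕ∞) ≤ ((R.dist S b m' : ℕ∞))
    exact Nat.cast_le.mpr (by omega)
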